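/- (Monodromy theorem) Let D ⊆ ℂ be a simply connected domain, a ∈ D, and let f be a function analytic in a neighborhood of a. Suppose that for every point x ∈ D and every path in D from a to x, the germ of f at a admits analytic continuation along that path. Then the continuation is independent of the path: for any two paths in D from a to x, the analytic germs at x obtained by continuation along the two paths coincide (equivalently, f extends to a single analytic function on all of D). -/
import Mathlib


open Topology Filter

noncomputable section

/-- `ContinuesAlong f γ h` : the germ of the analytic function `f` at `γ 0` admits an analytic
continuation along the path `γ : [0,1] → ℂ`, the final germ (at `γ 1`) being that of `h`.
Concretely: there is a family `F t` of convergent power series (germs of analytic functions)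
at the points `γ t`, starting at the germ of `f` and ending at the germ of `h`, each germ
being obtained locally by re-expansion of its neighbours. -/
def ContinuesAlong (f : ℂ → ℂ) (γ : ℝ → ℂ) (h : ℂ → ℂ) : Prop :=
  ∃ F : ℝ → ℂ → ℂ,
    (∀ t ∈ Set.Icc (0 : ℝ) 1, AnalyticAt ℂ (F t) (γ t)) ∧
    F 0 =ᶠ[𝓝 (γ 0)] f ∧
    F 1 =ᶠ[𝓝 (γ 1)] h ∧
    ∀ t ∈ Set.Icc (0 : ℝ) 1, ∀ᶠ s in 𝓝 t, s ∈ Set.Icc (0 : ℝ) 1 →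
      F s =ᶠ[𝓝 (γ s)] F t

open Set Metric


lemma clopen_Icc_principle (P : ℝ → Prop)
    (hloc : ∀ t ∈ Set.Icc (0:ℝ) 1, ∃ U ∈ 𝓝 t,
      ∀ s ∈ U, s ∈ Set.Icc (0:ℝ) 1 → (P s ↔ P t))
    (t₀ : ℝ) (ht₀ : t₀ ∈ Set.Icc (0:ℝ) 1) (hP₀ : P t₀) :
    ∀ t ∈ Set.Icc (0:ℝ) 1, P t := by
  haveI : PreconnectedSpace (Set.Icc (0:ℝ) 1) :=
    Subtype.preconnectedSpace isPreconnected_Icc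
  set S : Set (Set.Icc (0:ℝ) 1) := {t | P ↑t} with hS
  have hnhds : ∀ t : Set.Icc (0:ℝ) 1, {s : Set.Icc (0:ℝ) 1 | P ↑s ↔ P ↑t} ∈ 𝓝 t := by
    intro t
    obtain ⟨U, hU, hUiff⟩ := hloc ↑t t.2
    have : Subtype.val ⁻¹' U ∈ 𝓝 t :=
      continuous_subtype_val.continuousAt.preimage_mem_nhds hU
    exact mem_of_superset this (fun s hs => hUiff ↑s hs s.2)
  have hclopen : IsClopen S := by
    constructor
    · rw [← isOpen_compl_iff, isOpen_iff_mem_nhds]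
      intro t ht
      exact mem_of_superset (hnhds t) (fun s hs hPs => ht (hs.mp hPs))
    · rw [isOpen_iff_mem_nhds]
      intro t ht
      exact mem_of_superset (hnhds t) (fun s hs => hs.mpr ht)
  have huniv : S = Set.univ := hclopen.eq_univ ⟨⟨t₀, ht₀⟩, hP₀⟩
  intro t ht
  have : (⟨t, ht⟩ : Set.Icc (0:ℝ) 1) ∈ S := huniv ▸ Set.mem_univ _
  exact this

lemma germ_unique_along (γ : ℝ → ℂ) (hγ : ContinuousOn γ (Set.Icc 0 1))
    (F G : ℝ → ℂ → ℂ)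
    (hFa : ∀ t ∈ Set.Icc (0:ℝ) 1, AnalyticAt ℂ (F t) (γ t))
    (hGa : ∀ t ∈ Set.Icc (0:ℝ) 1, AnalyticAt ℂ (G t) (γ t))
    (hFp : ∀ t ∈ Set.Icc (0:ℝ) 1, ∀ᶠ s in 𝓝 t, s ∈ Set.Icc (0:ℝ) 1 → F s =ᶠ[𝓝 (γ s)] F t)
    (hGp : ∀ t ∈ Set.Icc (0:ℝ) 1, ∀ᶠ s in 𝓝 t, s ∈ Set.Icc (0:ℝ) 1 → G s =ᶠ[𝓝 (γ s)] G t)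
    (h0 : F 0 =ᶠ[𝓝 (γ 0)] G 0) : F 1 =ᶠ[𝓝 (γ 1)] G 1 := by
  have key : ∀ t ∈ Set.Icc (0:ℝ) 1, F t =ᶠ[𝓝 (γ t)] G t := by
    refine clopen_Icc_principle (fun t => F t =ᶠ[𝓝 (γ t)] G t) ?_ 0 (by norm_num) h0
    intro t ht
    -- ball where both F t and G t are analytic
    have hev : ∀ᶠ z in 𝓝 (γ t), AnalyticAt ℂ (F t) z ∧ AnalyticAt ℂ (G t) z :=
      (hFa t ht).eventually_analyticAt.and (hGa t ht).eventually_analyticAt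
    obtain ⟨r, hr, hball⟩ := Metric.mem_nhds_iff.mp hev
    have hFb : AnalyticOnNhd ℂ (F t) (Metric.ball (γ t) r) := fun z hz => (hball hz).1
    have hGb : AnalyticOnNhd ℂ (G t) (Metric.ball (γ t) r) := fun z hz => (hball hz).2
    have hpc : IsPreconnected (Metric.ball (γ t) r) := (convex_ball _ _).isPreconnected
    -- eventual neighborhood in ℝ
    have hγt : ∀ᶠ s in 𝓝 t, s ∈ Set.Icc (0:ℝ) 1 → γ s ∈ Metric.ball (γ t) r := by
      have : ∀ᶠ s in 𝓝[Set.Icc (0:ℝ) 1] t, γ s ∈ Metric.ball (γ t) r :=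
        (hγ t ht).eventually (isOpen_ball.mem_nhds (mem_ball_self hr))
      exact eventually_nhdsWithin_iff.mp this
    have hE : ∀ᶠ s in 𝓝 t, s ∈ Set.Icc (0:ℝ) 1 →
        (F s =ᶠ[𝓝 (γ s)] F t ∧ G s =ᶠ[𝓝 (γ s)] G t ∧ γ s ∈ Metric.ball (γ t) r) := by
      filter_upwards [hFp t ht, hGp t ht, hγt] with s h1 h2 h3 hs
      exact ⟨h1 hs, h2 hs, h3 hs⟩
    obtain ⟨U, hU, hUs⟩ := hE.exists_mem
    refine ⟨U, hU, fun s hsU hs => ?_⟩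
    obtain ⟨hFs, hGs, hγs⟩ := hUs s hsU hs
    constructor
    · intro hPs
      -- F t =ᶠ G t at γ s, conclude at γ t
      have h1 : F t =ᶠ[𝓝 (γ s)] G t := hFs.symm.trans (hPs.trans hGs)
      have h2 : Set.EqOn (F t) (G t) (Metric.ball (γ t) r) :=
        hFb.eqOn_of_preconnected_of_eventuallyEq hGb hpc hγs h1
      exact h2.eventuallyEq_of_mem (isOpen_ball.mem_nhds (mem_ball_self hr))
    · intro hPt
      have h2 : Set.EqOn (F t) (G t) (Metric.ball (γ t) r) :=
        hFb.eqOn_of_preconnected_of_eventuallyEq hGb hpc (mem_ball_self hr) hPt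
      have h1 : F t =ᶠ[𝓝 (γ s)] G t :=
        h2.eventuallyEq_of_mem (isOpen_ball.mem_nhds hγs)
      exact hFs.trans (h1.trans hGs.symm)
  exact key 1 (by norm_num)


lemma continuation_stable (γ : ℝ → ℂ) (hγ : ContinuousOn γ (Set.Icc 0 1))
    (F : ℝ → ℂ → ℂ)
    (hFa : ∀ t ∈ Set.Icc (0:ℝ) 1, AnalyticAt ℂ (F t) (γ t))
    (hFp : ∀ t ∈ Set.Icc (0:ℝ) 1, ∀ᶠ s in 𝓝 t, s ∈ Set.Icc (0:ℝ) 1 → F s =ᶠ[𝓝 (γ s)] F t) :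
    ∃ ε > 0, ∀ γ' : ℝ → ℂ, ContinuousOn γ' (Set.Icc 0 1) →
      (∀ t ∈ Set.Icc (0:ℝ) 1, dist (γ' t) (γ t) < ε) →
      ∃ G : ℝ → ℂ → ℂ,
        (∀ t ∈ Set.Icc (0:ℝ) 1, AnalyticAt ℂ (G t) (γ' t)) ∧
        G 0 =ᶠ[𝓝 (γ 0)] F 0 ∧ G 1 =ᶠ[𝓝 (γ 1)] F 1 ∧
        (∀ t ∈ Set.Icc (0:ℝ) 1, ∀ᶠ s in 𝓝 t, s ∈ Set.Icc (0:ℝ) 1 →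
          G s =ᶠ[𝓝 (γ' s)] G t) := by
  -- open cover by neighbourhoods where the germ family is represented by one function
  have hcover : Set.Icc (0:ℝ) 1 ⊆ ⋃ i : Set.Icc (0:ℝ) 1,
      interior {s | s ∈ Set.Icc (0:ℝ) 1 → F s =ᶠ[𝓝 (γ s)] F ↑i} := by
    intro t ht
    exact Set.mem_iUnion.mpr ⟨⟨t, ht⟩, mem_interior_iff_mem_nhds.mpr (hFp t ht)⟩
  obtain ⟨δ, hδ, hleb⟩ := lebesgue_number_lemma_of_metric isCompact_Icc
    (fun _ => isOpen_interior) hcover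
  obtain ⟨n, hn⟩ := exists_nat_one_div_lt hδ
  obtain ⟨m, hm1, hmδ⟩ : ∃ m : ℕ, 1 ≤ m ∧ 1/(m:ℝ) < δ :=
    ⟨n+1, by omega, by push_cast; exact hn⟩
  clear hn
  have hmpos : (0:ℝ) < (m:ℝ) := by exact_mod_cast hm1
  set tt : ℕ → ℝ := fun i => (i : ℝ) / m with htt
  have htt_mono : ∀ i j : ℕ, i < j → tt i < tt j := fun i j hij =>
    (div_lt_div_iff_of_pos_right hmpos).mpr (by exact_mod_cast hij)
  have htt_nonneg : ∀ i, 0 ≤ tt i := fun i => by positivity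
  have htt_le_one : ∀ i, i ≤ m → tt i ≤ 1 := by
    intro i hi
    rw [htt]
    rw [div_le_one hmpos]
    exact_mod_cast hi
  have hsubIcc : ∀ i : ℕ, i < m → Set.Icc (tt i) (tt (i+1)) ⊆ Set.Icc (0:ℝ) 1 := by
    intro i hi s hs
    exact ⟨le_trans (htt_nonneg i) hs.1, le_trans hs.2 (htt_le_one (i+1) hi)⟩
  -- choose representative functions on subintervals
  have hsub : ∀ i : ℕ, i < m → ∃ j : Set.Icc (0:ℝ) 1,
      ∀ s ∈ Set.Icc (tt i) (tt (i+1)), F s =ᶠ[𝓝 (γ s)] F ↑j := by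
    intro i hi
    have httIcc : tt i ∈ Set.Icc (0:ℝ) 1 := ⟨htt_nonneg i, htt_le_one i (le_of_lt hi)⟩
    obtain ⟨j, hj⟩ := hleb (tt i) httIcc
    refine ⟨j, fun s hs => ?_⟩
    have hball : s ∈ Metric.ball (tt i) δ := by
      rw [Metric.mem_ball, Real.dist_eq, abs_of_nonneg (by linarith [hs.1])]
      have h2 : s ≤ tt i + 1/m := by
        have : tt (i+1) = tt i + 1/m := by rw [htt]; push_cast; ring
        linarith [hs.2]
      linarith [hmδ]
    exact interior_subset (hj hball) (hsubIcc i hi hs)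
  choose! τ hτ using hsub
  set φ : ℕ → ℂ → ℂ := fun i => F ↑(τ i) with hφ
  have hP1 : ∀ i : ℕ, i < m → ∀ s ∈ Set.Icc (tt i) (tt (i+1)),
      F s =ᶠ[𝓝 (γ s)] φ i := fun i hi s hs => hτ i hi s hs
  have hP2 : ∀ i : ℕ, i < m → ∀ s ∈ Set.Icc (tt i) (tt (i+1)),
      AnalyticAt ℂ (φ i) (γ s) := fun i hi s hs =>
    (hFa s (hsubIcc i hi hs)).congr (hP1 i hi s hs)
  -- junction balls
  have hP3 : ∀ i : ℕ, i < m → ∃ r > 0, (1 ≤ i →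
      Set.EqOn (φ (i-1)) (φ i) (Metric.ball (γ (tt i)) r)) := by
    intro i hi
    by_cases h1 : 1 ≤ i
    · have hmem1 : tt i ∈ Set.Icc (tt (i-1)) (tt (i-1+1)) := by
        rw [Nat.sub_add_cancel h1]
        exact ⟨le_of_lt (htt_mono (i-1) i (by omega)), le_refl _⟩
      have hmem2 : tt i ∈ Set.Icc (tt i) (tt (i+1)) :=
        ⟨le_refl _, le_of_lt (htt_mono _ _ (Nat.lt_succ_self i))⟩
      have ha1 : AnalyticAt ℂ (φ (i-1)) (γ (tt i)) :=
        hP2 (i-1) (by omega) (tt i) hmem1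
      have ha2 : AnalyticAt ℂ (φ i) (γ (tt i)) := hP2 i hi (tt i) hmem2
      have heq : φ (i-1) =ᶠ[𝓝 (γ (tt i))] φ i :=
        (hP1 (i-1) (by omega) (tt i) hmem1).symm.trans (hP1 i hi (tt i) hmem2)
      obtain ⟨r, hr, hball⟩ := Metric.mem_nhds_iff.mp
        (ha1.eventually_analyticAt.and ha2.eventually_analyticAt)
      refine ⟨r, hr, fun _ => ?_⟩
      exact AnalyticOnNhd.eqOn_of_preconnected_of_eventuallyEq
        (fun z hz => (hball hz).1) (fun z hz => (hball hz).2)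
        (convex_ball _ _).isPreconnected (mem_ball_self hr) heq
    · exact ⟨1, one_pos, fun h => absurd h h1⟩
  choose! r hrpos hrEq using hP3
  -- thickenings of the arcs
  have hP4 : ∀ i : ℕ, i < m → ∃ e > 0,
      Metric.thickening e (γ '' Set.Icc (tt i) (tt (i+1))) ⊆
        {z | AnalyticAt ℂ (φ i) z} := by
    intro i hi
    apply IsCompact.exists_thickening_subset_open
    · exact isCompact_Icc.image_of_continuousOn (hγ.mono (hsubIcc i hi))
    · exact isOpen_analyticAt ℂ (φ i)
    · rintro z ⟨s, hs, rfl⟩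
      exact hP2 i hi s hs
  choose! e hepos hethick using hP4
  have hmne : (Finset.range m).Nonempty := ⟨0, Finset.mem_range.mpr (by omega)⟩
  set ε := (Finset.range m).inf' hmne (fun i => min (e i) (r i)) with hε
  have hεpos : 0 < ε := by
    rw [hε, Finset.lt_inf'_iff]
    intro i hi
    rw [Finset.mem_range] at hi
    exact lt_min (hepos i hi) (hrpos i hi)
  have hεe : ∀ i, i < m → ε ≤ e i := fun i hi =>
    le_trans (Finset.inf'_le _ (Finset.mem_range.mpr hi)) (min_le_left _ _)
  have hεr : ∀ i, i < m → ε ≤ r i := fun i hi =>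
    le_trans (Finset.inf'_le _ (Finset.mem_range.mpr hi)) (min_le_right _ _)
  refine ⟨ε, hεpos, fun γ' hγ' hdist => ?_⟩
  set idx : ℝ → ℕ := fun s => min (m-1) ⌊(m:ℝ) * s⌋₊ with hidx
  have hidx_lt : ∀ s, idx s < m := fun s =>
    lt_of_le_of_lt (min_le_left _ _) (by omega)
  have hidx_eq : ∀ i : ℕ, i < m → ∀ s : ℝ, tt i ≤ s →
      (s < tt (i+1) ∨ (i + 1 = m ∧ s ≤ 1)) → idx s = i := by
    intro i hi s h1 h2
    have hs0 : 0 ≤ s := le_trans (htt_nonneg i) h1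
    have hims : (i:ℝ) ≤ (m:ℝ) * s := by
      rw [htt, div_le_iff₀ hmpos] at h1
      linarith [h1]
    have hfl_ge : i ≤ ⌊(m:ℝ)*s⌋₊ := Nat.le_floor (by exact_mod_cast hims)
    have hle : idx s ≤ i := by
      rcases h2 with h2 | ⟨h2, h2'⟩
      · have hms : (m:ℝ)*s < ((i+1:ℕ):ℝ) := by
          rw [htt, lt_div_iff₀ hmpos] at h2
          linarith [h2]
        have : ⌊(m:ℝ)*s⌋₊ < i+1 := by
          rw [Nat.floor_lt (by positivity)]
          exact hms
        exact le_trans (min_le_right _ _) (Nat.lt_succ_iff.mp this)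
      · exact le_trans (min_le_left _ _) (by omega)
    have hge : i ≤ idx s := le_min (by omega) hfl_ge
    omega
  have hmem : ∀ s ∈ Set.Icc (0:ℝ) 1, s ∈ Set.Icc (tt (idx s)) (tt (idx s + 1)) := by
    intro s hs
    have hs0 : (0:ℝ) ≤ (m:ℝ)*s := mul_nonneg hmpos.le hs.1
    constructor
    · have h1 : ((idx s : ℕ) : ℝ) ≤ (m:ℝ)*s := by
        calc ((idx s : ℕ) : ℝ) ≤ (⌊(m:ℝ)*s⌋₊ : ℝ) := by
              exact_mod_cast min_le_right (m-1) _
        _ ≤ (m:ℝ)*s := Nat.floor_le hs0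
      rw [htt, div_le_iff₀ hmpos]
      linarith
    · have h1 : (m:ℝ)*s ≤ (idx s : ℝ) + 1 := by
        rcases le_total (⌊(m:ℝ)*s⌋₊) (m-1) with hc | hc
        · have : idx s = ⌊(m:ℝ)*s⌋₊ := min_eq_right hc
          rw [this]
          exact le_of_lt (Nat.lt_floor_add_one _)
        · have h2 : idx s = m - 1 := min_eq_left hc
          have h3 : ((m-1 : ℕ) : ℝ) = (m:ℝ) - 1 := by
            have : 1 ≤ m := hm1
            push_cast [Nat.cast_sub this]
            ring
          rw [h2, h3]
          nlinarith [hs.2]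
      rw [htt, le_div_iff₀ hmpos]
      have : ((idx s + 1 : ℕ) : ℝ) = (idx s : ℝ) + 1 := by push_cast; ring
      rw [this]
      linarith
  set G : ℝ → ℂ → ℂ := fun s => φ (idx s) with hG
  have hG_an : ∀ s ∈ Set.Icc (0:ℝ) 1, AnalyticAt ℂ (G s) (γ' s) := by
    intro s hs
    have h1 : γ s ∈ γ '' Set.Icc (tt (idx s)) (tt (idx s + 1)) :=
      Set.mem_image_of_mem _ (hmem s hs)
    have h2 : γ' s ∈ Metric.thickening (e (idx s))
        (γ '' Set.Icc (tt (idx s)) (tt (idx s + 1))) :=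
      Metric.mem_thickening_iff.mpr
        ⟨γ s, h1, lt_of_lt_of_le (hdist s hs) (hεe _ (hidx_lt s))⟩
    exact hethick _ (hidx_lt s) h2
  have hidx0 : idx 0 = 0 := by
    simp [hidx]
  have hidx1 : idx 1 = m - 1 := by
    have h1 : ⌊(m:ℝ)*1⌋₊ = m := by
      rw [mul_one]
      exact_mod_cast Nat.floor_natCast m
    show min (m-1) ⌊(m:ℝ)*1⌋₊ = m - 1
    rw [h1]
    exact min_eq_left (by omega)
  have hG0 : G 0 =ᶠ[𝓝 (γ 0)] F 0 := by
    have hmem0 : (0:ℝ) ∈ Set.Icc (tt 0) (tt 1) := by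
      constructor
      · simp [htt]
      · exact le_of_lt (lt_of_le_of_lt (le_refl _) (by simpa [htt] using htt_mono 0 1 one_pos))
    have := hP1 0 (by omega) 0 (by simpa [htt] using hmem0)
    show φ (idx 0) =ᶠ[𝓝 (γ 0)] F 0
    rw [hidx0]
    exact this.symm
  have hG1 : G 1 =ᶠ[𝓝 (γ 1)] F 1 := by
    have hkey : tt (m-1+1) = 1 := by
      rw [Nat.sub_add_cancel hm1]
      show (m:ℝ)/(m:ℝ) = 1
      exact div_self hmpos.ne'
    have hmem1 : (1:ℝ) ∈ Set.Icc (tt (m-1)) (tt (m-1+1)) := by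
      rw [hkey]
      exact ⟨htt_le_one (m-1) (by omega), le_refl _⟩
    have := hP1 (m-1) (by omega) 1 hmem1
    show φ (idx 1) =ᶠ[𝓝 (γ 1)] F 1
    rw [hidx1]
    exact this.symm
  refine ⟨G, hG_an, hG0, hG1, ?_⟩
  intro t ht
  -- claim about nearby indices
  have hmemt := hmem t ht
  have hclaim : ∀ᶠ s in 𝓝 t, s ∈ Set.Icc (0:ℝ) 1 →
      (idx s = idx t ∨ (idx s + 1 = idx t ∧
        γ' s ∈ Metric.ball (γ (tt (idx t))) (r (idx t)))) := by
    have hup : ∀ᶠ s in 𝓝 t, s ∈ Set.Icc (0:ℝ) 1 →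
        (s < tt (idx t + 1) ∨ (idx t + 1 = m ∧ s ≤ 1)) := by
      by_cases hti : t < tt (idx t + 1)
      · filter_upwards [eventually_lt_nhds hti] with s hs _
        exact Or.inl hs
      · have hteq : t = tt (idx t + 1) := le_antisymm hmemt.2 (not_lt.mp hti)
        have him : idx t + 1 = m := by
          by_contra hne
          have hlt : idx t + 1 < m := lt_of_le_of_ne (hidx_lt t) hne
          have hcontr : idx t = idx t + 1 := by
            apply hidx_eq (idx t + 1) hlt t hteq.ge
            refine Or.inl ?_
            calc t = tt (idx t + 1) := hteq
            _ < tt (idx t + 1 + 1) := htt_mono _ _ (Nat.lt_succ_self _)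
          omega
        exact Filter.Eventually.of_forall (fun s hs => Or.inr ⟨him, hs.2⟩)
    rcases eq_or_lt_of_le hmemt.1 with hteq | htlt
    · -- t = tt (idx t)
      by_cases hi0 : idx t = 0
      · filter_upwards [hup] with s hs hsIcc
        refine Or.inl ?_
        apply hidx_eq (idx t) (hidx_lt t) s ?_ (hs hsIcc)
        rw [hi0, htt]
        simpa using hsIcc.1
      · -- idx t ≥ 1
        have hi1 : 1 ≤ idx t := by omega
        have hprev : tt (idx t - 1) < t :=
          lt_of_lt_of_le (htt_mono (idx t - 1) (idx t) (by omega)) (le_of_eq hteq)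
        have hballmem : γ' t ∈ Metric.ball (γ (tt (idx t))) (r (idx t)) := by
          rw [Metric.mem_ball, hteq]
          exact lt_of_lt_of_le (hdist t ht) (hεr _ (hidx_lt t))
        have hcont : ∀ᶠ s in 𝓝 t, s ∈ Set.Icc (0:ℝ) 1 →
            γ' s ∈ Metric.ball (γ (tt (idx t))) (r (idx t)) := by
          have : ∀ᶠ s in 𝓝[Set.Icc (0:ℝ) 1] t,
              γ' s ∈ Metric.ball (γ (tt (idx t))) (r (idx t)) :=
            (hγ' t ht).eventually (isOpen_ball.mem_nhds hballmem)
          exact eventually_nhdsWithin_iff.mp this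
        filter_upwards [hup, hcont, eventually_gt_nhds hprev] with s hs1 hs2 hs3 hsIcc
        rcases le_or_gt t s with hts | hst
        · exact Or.inl (hidx_eq (idx t) (hidx_lt t) s (hteq.le.trans hts) (hs1 hsIcc))
        · refine Or.inr ⟨?_, hs2 hsIcc⟩
          have hsz : idx s = idx t - 1 := by
            apply hidx_eq (idx t - 1) (by have := hidx_lt t; omega) s (le_of_lt hs3)
            refine Or.inl ?_
            rw [Nat.sub_add_cancel hi1]
            exact hst.trans_le hteq.ge
          omega
    · -- tt (idx t) < t
      filter_upwards [hup, eventually_gt_nhds htlt] with s hs1 hs2 hsIcc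
      exact Or.inl (hidx_eq (idx t) (hidx_lt t) s (le_of_lt hs2) (hs1 hsIcc))
  filter_upwards [hclaim] with s hcl hs
  rcases hcl hs with h | ⟨h1, h2⟩
  · show φ (idx s) =ᶠ[𝓝 (γ' s)] φ (idx t)
    rw [h]
  · have hi1 : 1 ≤ idx t := by omega
    have hEqOn : Set.EqOn (φ (idx t - 1)) (φ (idx t))
        (Metric.ball (γ (tt (idx t))) (r (idx t))) := hrEq (idx t) (hidx_lt t) hi1
    have h3 : idx s = idx t - 1 := by omega
    show φ (idx s) =ᶠ[𝓝 (γ' s)] φ (idx t)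
    rw [h3]
    exact hEqOn.eventuallyEq_of_mem (isOpen_ball.mem_nhds h2)

lemma continuesAlong_congr {f h : ℂ → ℂ} {γ γ' : ℝ → ℂ}
    (hγγ' : ∀ t ∈ Set.Icc (0:ℝ) 1, γ t = γ' t) :
    ContinuesAlong f γ h → ContinuesAlong f γ' h := by
  rintro ⟨F, hFa, hF0, hF1, hFp⟩
  refine ⟨F, ?_, ?_, ?_, ?_⟩
  · intro t ht; rw [← hγγ' t ht]; exact hFa t ht
  · rw [← hγγ' 0 (by norm_num)]; exact hF0
  · rw [← hγγ' 1 (by norm_num)]; exact hF1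
  · intro t ht
    filter_upwards [hFp t ht] with s hs hsIcc
    rw [← hγγ' s hsIcc]
    exact hs hsIcc

lemma continuesAlong_unique {f h h' : ℂ → ℂ} {γ : ℝ → ℂ}
    (hγ : ContinuousOn γ (Set.Icc 0 1))
    (hc : ContinuesAlong f γ h) (hc' : ContinuesAlong f γ h') :
    h =ᶠ[𝓝 (γ 1)] h' := by
  obtain ⟨F, hFa, hF0, hF1, hFp⟩ := hc
  obtain ⟨G, hGa, hG0, hG1, hGp⟩ := hc'
  have := germ_unique_along γ hγ F G hFa hGa hFp hGp (hF0.trans hG0.symm)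
  exact hF1.symm.trans (this.trans hG1)


/-- **Monodromy theorem.**  Let `D ⊆ ℂ` be a simply connected domain, `a ∈ D` and `f` analytic
in a neighbourhood of `a`.  If the germ of `f` at `a` admits an analytic continuation along
every path in `D` starting at `a`, then the continuation is independent of the path: for any
two paths in `D` from `a` to a point `x`, the germs at `x` obtained by continuation along the
two paths coincide. -/
theorem monodromy_theorem (D : Set ℂ) (hD : IsOpen D) (hsc : SimplyConnectedSpace D)
    (a : ℂ) (ha : a ∈ D) (f : ℂ → ℂ) (hf : AnalyticAt ℂ f a)
    (hcont : ∀ x ∈ D, ∀ γ : ℝ → ℂ, ContinuousOn γ (Set.Icc 0 1) →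
      (∀ t ∈ Set.Icc (0 : ℝ) 1, γ t ∈ D) → γ 0 = a → γ 1 = x →
      ∃ h : ℂ → ℂ, ContinuesAlong f γ h) :
    ∀ x ∈ D, ∀ γ₁ γ₂ : ℝ → ℂ,
      ContinuousOn γ₁ (Set.Icc 0 1) → (∀ t ∈ Set.Icc (0 : ℝ) 1, γ₁ t ∈ D) →
      γ₁ 0 = a → γ₁ 1 = x →
      ContinuousOn γ₂ (Set.Icc 0 1) → (∀ t ∈ Set.Icc (0 : ℝ) 1, γ₂ t ∈ D) →
      γ₂ 0 = a → γ₂ 1 = x →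
      ∀ h₁ h₂ : ℂ → ℂ, ContinuesAlong f γ₁ h₁ → ContinuesAlong f γ₂ h₂ →
        h₁ =ᶠ[𝓝 x] h₂ := by
  intro x hx γ₁ γ₂ hγ₁c hγ₁D hγ₁0 hγ₁1 hγ₂c hγ₂D hγ₂0 hγ₂1 h₁ h₂ hc₁ hc₂
  haveI := hsc
  -- construct paths in D
  have hpath : ∀ (γ : ℝ → ℂ), ContinuousOn γ (Set.Icc 0 1) →
      (∀ t ∈ Set.Icc (0:ℝ) 1, γ t ∈ D) → γ 0 = a → γ 1 = x →
      ∃ p : Path (⟨a, ha⟩ : D) ⟨x, hx⟩, ∀ t : unitInterval, (p t : ℂ) = γ ↑t := by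
    intro γ hc hDmem h0' h1'
    have hcont2 : Continuous fun t : unitInterval => γ ↑t :=
      hc.comp_continuous continuous_subtype_val (fun t => t.2)
    refine ⟨⟨⟨fun t => ⟨γ ↑t, hDmem ↑t t.2⟩, hcont2.subtype_mk _⟩, ?_, ?_⟩,
      fun t => rfl⟩
    · exact Subtype.ext (by simp only [ContinuousMap.coe_mk, Set.Icc.coe_zero]; exact h0')
    · exact Subtype.ext (by simp only [ContinuousMap.coe_mk, Set.Icc.coe_one]; exact h1')
  obtain ⟨p₁, hp₁⟩ := hpath γ₁ hγ₁c hγ₁D hγ₁0 hγ₁1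
  obtain ⟨p₂, hp₂⟩ := hpath γ₂ hγ₂c hγ₂D hγ₂0 hγ₂1
  obtain ⟨H⟩ : Path.Homotopic p₁ p₂ := SimplyConnectedSpace.paths_homotopic p₁ p₂
  set π : ℝ → unitInterval := fun u => Set.projIcc 0 1 zero_le_one u with hπ
  have hπcont : Continuous π := continuous_projIcc
  set Γ : ℝ → ℝ → ℂ := fun s t => ((H (π s, π t) : D) : ℂ) with hΓdef
  have hΓcont : Continuous (fun q : ℝ × ℝ => Γ q.1 q.2) :=
    continuous_subtype_val.comp (H.continuous.comp
      ((hπcont.comp continuous_fst).prodMk (hπcont.comp continuous_snd)))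
  have hΓcOn : ∀ s, ContinuousOn (Γ s) (Set.Icc 0 1) := fun s =>
    (hΓcont.comp (continuous_const.prodMk continuous_id)).continuousOn
  have hΓD : ∀ s t, Γ s t ∈ D := fun s t => (H (π s, π t)).2
  have hπ0 : π 0 = 0 := Set.projIcc_left _
  have hπ1 : π 1 = 1 := Set.projIcc_right _
  have hΓ0 : ∀ s, Γ s 0 = a := by
    intro s
    show ((H (π s, π 0) : D) : ℂ) = a
    rw [hπ0, Path.Homotopy.source H (π s)]
  have hΓ1 : ∀ s, Γ s 1 = x := by
    intro s
    show ((H (π s, π 1) : D) : ℂ) = x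
    rw [hπ1, Path.Homotopy.target H (π s)]
  have hΓγ₁ : ∀ t ∈ Set.Icc (0:ℝ) 1, Γ 0 t = γ₁ t := by
    intro t ht
    show ((H (π 0, π t) : D) : ℂ) = γ₁ t
    rw [hπ0]
    have h1 : H (0, π t) = p₁ (π t) := H.apply_zero (π t)
    rw [h1]
    rw [hp₁ (π t)]
    congr 1
    exact congrArg Subtype.val (Set.projIcc_of_mem zero_le_one ht)
  have hΓγ₂ : ∀ t ∈ Set.Icc (0:ℝ) 1, Γ 1 t = γ₂ t := by
    intro t ht
    show ((H (π 1, π t) : D) : ℂ) = γ₂ t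
    rw [hπ1]
    have h1 : H (1, π t) = p₂ (π t) := H.apply_one (π t)
    rw [h1, hp₂ (π t)]
    congr 1
    exact congrArg Subtype.val (Set.projIcc_of_mem zero_le_one ht)
  -- uniform continuity of the homotopy on the square
  have hUC : UniformContinuousOn (fun q : ℝ × ℝ => Γ q.1 q.2)
      (Set.Icc (0:ℝ) 1 ×ˢ Set.Icc (0:ℝ) 1) :=
    (isCompact_Icc.prod isCompact_Icc).uniformContinuousOn_of_continuous
      hΓcont.continuousOn
  -- the clopen argument in the homotopy parameter
  set P : ℝ → Prop := fun s => ∃ h : ℂ → ℂ,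
    ContinuesAlong f (Γ s) h ∧ h =ᶠ[𝓝 x] h₂ with hP
  have hloc : ∀ s₀ ∈ Set.Icc (0:ℝ) 1, ∃ U ∈ 𝓝 s₀,
      ∀ s ∈ U, s ∈ Set.Icc (0:ℝ) 1 → (P s ↔ P s₀) := by
    intro s₀ hs₀
    obtain ⟨h₀, F₀, hF₀a, hF₀0, hF₀1, hF₀p⟩ := hcont x hx (Γ s₀) (hΓcOn s₀)
      (fun t _ => hΓD s₀ t) (hΓ0 s₀) (hΓ1 s₀)
    obtain ⟨ε, hε, hstab⟩ := continuation_stable (Γ s₀) (hΓcOn s₀) F₀ hF₀a hF₀p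
    obtain ⟨δ, hδ, hδ'⟩ := Metric.uniformContinuousOn_iff.mp hUC ε hε
    refine ⟨Metric.ball s₀ δ, Metric.ball_mem_nhds _ hδ, fun s hsU hsIcc => ?_⟩
    have hdist : ∀ t ∈ Set.Icc (0:ℝ) 1, dist (Γ s t) (Γ s₀ t) < ε := by
      intro t ht
      have := hδ' (s, t) ⟨hsIcc, ht⟩ (s₀, t) ⟨hs₀, ht⟩ (by
        rw [Prod.dist_eq]
        simp only [dist_self]
        rw [max_eq_left dist_nonneg]
        exact Metric.mem_ball.mp hsU)
      exact this
    obtain ⟨G, hGa, hG0, hG1, hGp⟩ := hstab (Γ s) (hΓcOn s) hdist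
    have hGcont : ContinuesAlong f (Γ s) (G 1) := by
      refine ⟨G, hGa, ?_, EventuallyEq.rfl, hGp⟩
      have e0 : Γ s 0 = Γ s₀ 0 := by rw [hΓ0, hΓ0]
      rw [e0]
      exact hG0.trans hF₀0
    have hG1x : G 1 =ᶠ[𝓝 x] F₀ 1 := by rw [← hΓ1 s₀]; exact hG1
    have hF₀cont : ContinuesAlong f (Γ s₀) (F₀ 1) :=
      ⟨F₀, hF₀a, hF₀0, EventuallyEq.rfl, hF₀p⟩
    constructor
    · rintro ⟨h', hc', hh'⟩
      have huni := continuesAlong_unique (hΓcOn s) hc' hGcont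
      rw [hΓ1 s] at huni
      exact ⟨F₀ 1, hF₀cont, hG1x.symm.trans (huni.symm.trans hh')⟩
    · rintro ⟨h', hc', hh'⟩
      have huni := continuesAlong_unique (hΓcOn s₀) hc' hF₀cont
      rw [hΓ1 s₀] at huni
      exact ⟨G 1, hGcont, hG1x.trans (huni.symm.trans hh')⟩
  have h2' : P 1 :=
    ⟨h₂, continuesAlong_congr (fun t ht => (hΓγ₂ t ht).symm) hc₂, EventuallyEq.rfl⟩
  obtain ⟨h, hch, hhh₂⟩ := clopen_Icc_principle P hloc 1 (by norm_num) h2' 0 (by norm_num)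
  have hc₁' : ContinuesAlong f (Γ 0) h₁ :=
    continuesAlong_congr (fun t ht => (hΓγ₁ t ht).symm) hc₁
  have huni := continuesAlong_unique (hΓcOn 0) hc₁' hch
  rw [hΓ1 0] at huni
  exact huni.trans hhh₂

end
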